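/- Let G be a group and w a word such that the set of w-values w{G} is finite. Then the derived subgroup w(G)' of the verbal subgroup w(G) is finite. -/

import Mathlib

def wordValues {k : ℕ} (w : FreeGroup (Fin k)) (G : Type*) [Group G] : Set G :=
  Set.range fun g : Fin k → G => FreeGroup.lift g w

lemma conj_mem_wordValues {k : ℕ} {G : Type*} [Group G] (w : FreeGroup (Fin k))
    (g x : G) (hx : x ∈ wordValues w G) : g * x * g⁻¹ ∈ wordValues w G := by
  obtain ⟨f, rfl⟩ := hx
  refine ⟨fun i => g * f i * g⁻¹, ?_⟩
  have : (FreeGroup.lift fun i => g * f i * g⁻¹) =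
      (MulAut.conj g).toMonoidHom.comp (FreeGroup.lift f) := by
    apply FreeGroup.ext_hom
    intro i
    simp
  have h2 := congrArg (fun φ : FreeGroup (Fin k) →* G => φ w) this
  simpa using h2

open scoped commutatorElement in
/-- Schur-type auxiliary fact: if the center has finite index, the commutator set is finite. -/
lemma finite_commutatorSet_of_finiteIndex_center (H : Type*) [Group H]
    [Subgroup.FiniteIndex (Subgroup.center H)] : Finite (commutatorSet H) := by
  haveI : Finite (H ⧸ Subgroup.center H) := Subgroup.finite_quotient_of_finiteIndex
  have key1 : ∀ (a c z : H) (_ : ∀ x : H, z * x = x * z), ⁅a * z, c⁆ = ⁅a, c⁆ := by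
    intro a c z hz
    have hcz : z * c * z⁻¹ = c := by rw [hz, mul_assoc, mul_inv_cancel, mul_one]
    calc ⁅a * z, c⁆ = a * (z * c * z⁻¹) * a⁻¹ * c⁻¹ := by
          simp only [commutatorElement_def, mul_inv_rev]; group
      _ = ⁅a, c⁆ := by rw [hcz]; rfl
  have key2 : ∀ (a c z : H) (_ : ∀ x : H, z * x = x * z), ⁅a, c * z⁆ = ⁅a, c⁆ := by
    intro a c z hz
    have hcz : z * a⁻¹ * z⁻¹ = a⁻¹ := by rw [hz, mul_assoc, mul_inv_cancel, mul_one]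
    calc ⁅a, c * z⁆ = a * c * (z * a⁻¹ * z⁻¹) * c⁻¹ := by
          simp only [commutatorElement_def, mul_inv_rev]; group
      _ = ⁅a, c⁆ := by rw [hcz]; rfl
  have key : ∀ (a b : H) (z z' : Subgroup.center H), ⁅a * (z : H), b * (z' : H)⁆ = ⁅a, b⁆ := by
    intro a b z z'
    rw [key1 _ _ _ fun x => (Subgroup.mem_center_iff.mp z.2 x).symm,
      key2 _ _ _ fun x => (Subgroup.mem_center_iff.mp z'.2 x).symm]
  let f : (H ⧸ Subgroup.center H) × (H ⧸ Subgroup.center H) → H :=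
    fun p => ⁅p.1.out, p.2.out⁆
  have hsub : commutatorSet H ⊆ Set.range f := by
    rintro _ ⟨a, b, rfl⟩
    refine ⟨(QuotientGroup.mk a, QuotientGroup.mk b), ?_⟩
    obtain ⟨z, hzz⟩ := QuotientGroup.mk_out_eq_mul (Subgroup.center H) a
    obtain ⟨z', hzz'⟩ := QuotientGroup.mk_out_eq_mul (Subgroup.center H) b
    simp only [f, hzz, hzz', key]
  exact (Set.finite_range f).subset hsub |>.to_subtype

theorem derived_verbal_finite_of_wordValues_finite {k : ℕ} {G : Type*} [Group G]
    (w : FreeGroup (Fin k)) (hw : (wordValues w G).Finite) :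
    Finite (⁅Subgroup.closure (wordValues w G), Subgroup.closure (wordValues w G)⁆ :
      Subgroup G) := by
  set S : Set G := wordValues w G with hS
  set H : Subgroup G := Subgroup.closure S with hH
  haveI : Finite S := hw.to_subtype
  -- conjugation permutation of S
  have conjS : ∀ g : G, ∀ x : G, x ∈ S → g * x * g⁻¹ ∈ S := fun g x hx =>
    conj_mem_wordValues w g x hx
  let φ : G →* Equiv.Perm S :=
    { toFun := fun g =>
        { toFun := fun x => ⟨g * x * g⁻¹, conjS g x x.2⟩
          invFun := fun x => ⟨g⁻¹ * x * g, by simpa using conjS g⁻¹ x x.2⟩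
          left_inv := fun x => by ext; simp [mul_assoc]
          right_inv := fun x => by ext; simp [mul_assoc] }
      map_one' := by ext x; simp
      map_mul' := fun g h => by ext x; simp [mul_assoc] }
  let ψ : H →* Equiv.Perm S := φ.comp H.subtype
  haveI : Finite ψ.range := Subtype.finite
  haveI : ψ.ker.FiniteIndex := Subgroup.finiteIndex_ker ψ
  have hker : ψ.ker ≤ Subgroup.center H := by
    intro h hh
    rw [Subgroup.mem_center_iff]
    intro g
    have hcent : ∀ x : G, x ∈ S → (h : G) * x * (h : G)⁻¹ = x := by
      intro x hx
      have h1 : ψ h = 1 := MonoidHom.mem_ker.mp hh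
      have h2 : (ψ h) ⟨x, hx⟩ = ⟨x, hx⟩ := by rw [h1]; rfl
      simpa [ψ, φ] using congrArg Subtype.val h2
    have hcomm : ∀ x : G, x ∈ H → (h : G) * x = x * (h : G) := by
      intro x hx
      have hle : Subgroup.closure S ≤ Subgroup.centralizer {(h : G)} := by
        rw [Subgroup.closure_le]
        intro s hs
        show s ∈ Subgroup.centralizer {(h : G)}
        rw [Subgroup.mem_centralizer_iff]
        intro y hy
        rw [Set.mem_singleton_iff] at hy
        subst hy
        exact mul_inv_eq_iff_eq_mul.mp (hcent s hs)
      exact hle hx (h : G) (Set.mem_singleton _)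
    exact Subtype.ext (by simpa using (hcomm g g.2).symm)
  haveI : (Subgroup.center H).FiniteIndex := Subgroup.finiteIndex_of_le hker
  haveI : Finite (commutatorSet H) := finite_commutatorSet_of_finiteIndex_center H
  haveI : Finite (_root_.commutator H) := inferInstance
  have heq : (⁅H, H⁆ : Subgroup G) = (_root_.commutator H).map H.subtype := by
    rw [_root_.commutator_def, Subgroup.map_commutator]
    congr 1 <;>
      simp [← MonoidHom.range_eq_map, Subgroup.range_subtype]
  rw [hH] at heq
  rw [heq]
  have : Finite ((_root_.commutator H).map H.subtype : Set G) := by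
    rw [Subgroup.coe_map]
    exact Set.Finite.image _ (Set.toFinite _) |>.to_subtype
  exact this
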